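/- If the kernel k is twice continuously differentiable and ρ_X has compact support, then the operator on the RKHS H representing the Dirichlet energy satisfies S* 𝓛 S = Σ_{i=1}^d E_{X∼ρ_X}[∂_i k_X ⊗ ∂_i k_X], where ∂_i k_x ∈ H is the derivative evaluation map satisfying ∂_i g_θ(x) = ⟨θ, ∂_i k_x⟩_H. -/

import Mathlib

open MeasureTheory RealInnerProductSpace

theorem aux_integrable_of_continuous {α : Type*} [MeasurableSpace α] [TopologicalSpace α]
    [OpensMeasurableSpace α] [T2Space α] {V : Type*} [NormedAddCommGroup V]
    [SecondCountableTopologyEither α V]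
    {μ : Measure α} [IsFiniteMeasure μ] {K : Set α} (hK : IsCompact K)
    (hres : μ.restrict K = μ) {f : α → V} (hf : Continuous f) : Integrable f μ := by
  rw [← hres]
  exact hf.continuousOn.integrableOn_compact hK

/-- If the kernel `k` is twice continuously differentiable and `ρ_X` has compact
support, then the operator on the RKHS `H` representing the Dirichlet energy satisfies
`S* 𝓛 S = ∑_{i=1}^d E_{X∼ρ_X}[∂_i k_X ⊗ ∂_i k_X]`, where `∂_i k_x ∈ H` satisfies
`∂_i g_θ(x) = ⟨θ, ∂_i k_x⟩_H`.  We express this as the equality of the quadratic forms: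
for every `θ`, the Dirichlet energy `⟨Sθ, 𝓛 Sθ⟩ = E[‖∇ g_θ(X)‖²]` of `g_θ = Sθ` equals
`⟨θ, (∑_i E[∂_i k_X ⊗ ∂_i k_X]) θ⟩_H` (which determines the self-adjoint operator). -/
theorem dirichlet_energy_operator
    {d : ℕ} {H : Type*} [NormedAddCommGroup H] [InnerProductSpace ℝ H] [CompleteSpace H]
    (k : EuclideanSpace ℝ (Fin d) → EuclideanSpace ℝ (Fin d) → ℝ)
    (hk : ContDiff ℝ 2 fun p : EuclideanSpace ℝ (Fin d) × EuclideanSpace ℝ (Fin d) =>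
      k p.1 p.2)
    (kx : EuclideanSpace ℝ (Fin d) → H) (hkx : ∀ x x', k x x' = ⟪kx x, kx x'⟫)
    (ρ : Measure (EuclideanSpace ℝ (Fin d))) [IsProbabilityMeasure ρ]
    (hρc : ∃ K : Set (EuclideanSpace ℝ (Fin d)), IsCompact K ∧ ρ Kᶜ = 0)
    (dk : Fin d → EuclideanSpace ℝ (Fin d) → H)
    (hdk : ∀ (θ : H) (x : EuclideanSpace ℝ (Fin d)) (i : Fin d),
      ⟪dk i x, θ⟫ =
        fderiv ℝ (fun y => ⟪kx y, θ⟫) x (EuclideanSpace.single i (1 : ℝ))) :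
    ∀ θ : H,
      ∫ x, ‖gradient (fun y => ⟪kx y, θ⟫) x‖ ^ 2 ∂ρ
        = ⟪θ, ∑ i : Fin d, ∫ x, ⟪dk i x, θ⟫ • dk i x ∂ρ⟫ := by
  classical
  obtain ⟨K, hKc, hKz⟩ := hρc
  let E := EuclideanSpace ℝ (Fin d)
  let Kf : E × E → ℝ := fun p => k p.1 p.2
  have hk' : ContDiff ℝ 2 Kf := hk
  have hKd : Differentiable ℝ Kf := hk'.differentiable two_ne_zero
  have hG : ContDiff ℝ 1 (fderiv ℝ Kf) := hk'.fderiv_right (by norm_num)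
  have hGd : Differentiable ℝ (fderiv ℝ Kf) := hG.differentiable one_ne_zero
  -- first derivative identity
  have key1 : ∀ (i : Fin d) (b y : E),
      ⟪kx y, dk i b⟫ = fderiv ℝ Kf (b, y) (EuclideanSpace.single i (1 : ℝ), 0) := by
    intro i b y
    rw [real_inner_comm, hdk (kx y) b i]
    have h2 : (fun z : E => ⟪kx z, kx y⟫) = fun z => Kf (z, y) := by
      funext z; rw [← hkx]
    have h1 : HasFDerivAt (fun z : E => Kf (z, y))
        ((fderiv ℝ Kf (b, y)).comp (ContinuousLinearMap.inl ℝ E E)) b :=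
      by have := (hKd (b, y)).hasFDerivAt.comp b (hasFDerivAt_prodMk_left (𝕜 := ℝ) b y); exact this
    rw [h2, h1.fderiv]
    rfl
  -- second derivative identity
  have key2 : ∀ (i : Fin d) (a b : E),
      ⟪dk i a, dk i b⟫ = fderiv ℝ (fderiv ℝ Kf) (b, a)
        (0, EuclideanSpace.single i (1 : ℝ)) (EuclideanSpace.single i (1 : ℝ), 0) := by
    intro i a b
    rw [hdk (dk i b) a i]
    have h2 : (fun y : E => ⟪kx y, dk i b⟫) = fun y =>
        (ContinuousLinearMap.apply ℝ ℝ
          ((EuclideanSpace.single i (1 : ℝ), 0) : E × E)) (fderiv ℝ Kf (b, y)) := by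
      funext y; rw [key1 i b y]; rfl
    have h1 : HasFDerivAt (fun y : E => fderiv ℝ Kf (b, y))
        ((fderiv ℝ (fderiv ℝ Kf) (b, a)).comp (ContinuousLinearMap.inr ℝ E E)) a :=
      (hGd (b, a)).hasFDerivAt.comp a (hasFDerivAt_prodMk_right b a)
    have h3 := ((ContinuousLinearMap.apply ℝ ℝ
        ((EuclideanSpace.single i (1 : ℝ), 0) : E × E)).hasFDerivAt.comp a h1)
    have h3' : HasFDerivAt (fun y : E =>
        (ContinuousLinearMap.apply ℝ ℝ
          ((EuclideanSpace.single i (1 : ℝ), 0) : E × E)) (fderiv ℝ Kf (b, y)))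
        (((ContinuousLinearMap.apply ℝ ℝ ((EuclideanSpace.single i (1 : ℝ), 0) : E × E)).comp
          ((fderiv ℝ (fderiv ℝ Kf) (b, a)).comp (ContinuousLinearMap.inr ℝ E E)))) a := h3
    rw [h2, h3'.fderiv]
    rfl
  -- continuity of the mixed second derivative
  have hφc : ∀ i : Fin d, Continuous (fun p : E × E =>
      fderiv ℝ (fderiv ℝ Kf) p (0, EuclideanSpace.single i (1 : ℝ))
        (EuclideanSpace.single i (1 : ℝ), 0)) := fun i =>
    ((hG.continuous_fderiv one_ne_zero).clm_apply continuous_const).clm_apply continuous_const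
  -- continuity of dk i
  have hdkc : ∀ i : Fin d, Continuous (dk i) := by
    intro i
    rw [continuous_iff_continuousAt]
    intro a
    have hψ : ∀ b, ‖dk i b - dk i a‖ ^ 2
        = ⟪dk i b, dk i b⟫ - 2 * ⟪dk i b, dk i a⟫ + ⟪dk i a, dk i a⟫ := by
      intro b
      rw [norm_sub_sq_real, ← real_inner_self_eq_norm_sq, ← real_inner_self_eq_norm_sq]
    have c1 : Continuous fun b => ⟪dk i b, dk i b⟫ :=
      ((hφc i).comp (continuous_id.prodMk continuous_id)).congr fun b => (key2 i b b).symm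
    have c2 : Continuous fun b => ⟪dk i b, dk i a⟫ :=
      ((hφc i).comp (continuous_const.prodMk continuous_id)).congr fun b => (key2 i b a).symm
    have hc : Continuous fun b => ‖dk i b - dk i a‖ ^ 2 :=
      ((c1.sub (continuous_const.mul c2)).add continuous_const).congr fun b => (hψ b).symm
    have h0 : Filter.Tendsto (fun b => ‖dk i b - dk i a‖ ^ 2) (nhds a) (nhds 0) := by
      have := hc.tendsto a
      simpa using this
    have h1 : Filter.Tendsto (fun b => ‖dk i b - dk i a‖) (nhds a) (nhds 0) := by
      have h2 := (Real.continuous_sqrt.tendsto' 0 0 Real.sqrt_zero).comp h0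
      exact Filter.Tendsto.congr (fun b => Real.sqrt_sq (norm_nonneg _)) h2
    exact tendsto_iff_norm_sub_tendsto_zero.mpr h1
  -- restriction equality
  have hae : ∀ᵐ x ∂ρ, x ∈ K := by
    rw [MeasureTheory.ae_iff]
    exact hKz
  have hres : ρ.restrict K = ρ := Measure.restrict_eq_self_of_ae_mem hae
  intro θ
  -- continuity of scalar functions
  have csc : ∀ i : Fin d, Continuous fun x => ⟪dk i x, θ⟫ :=
    fun i => (hdkc i).inner continuous_const
  have hint_sq : ∀ i : Fin d, Integrable (fun x => ⟪dk i x, θ⟫ ^ 2) ρ :=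
    fun i => aux_integrable_of_continuous hKc hres ((csc i).pow 2)
  have hint_v : ∀ i : Fin d, Integrable (fun x => ⟪dk i x, θ⟫ • dk i x) ρ :=
    fun i => aux_integrable_of_continuous hKc hres ((csc i).smul (hdkc i))
  -- pointwise identity for the gradient norm
  have hnorm : ∀ x, ‖gradient (fun y => ⟪kx y, θ⟫) x‖ ^ 2
      = ∑ i : Fin d, ⟪dk i x, θ⟫ ^ 2 := by
    intro x
    have hcoord : ∀ i : Fin d, gradient (fun y => ⟪kx y, θ⟫) x i = ⟪dk i x, θ⟫ := by
      intro i
      rw [hdk θ x i]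
      have h1 : gradient (fun y => ⟪kx y, θ⟫) x i
          = ⟪gradient (fun y => ⟪kx y, θ⟫) x, EuclideanSpace.single i (1 : ℝ)⟫ := by
        rw [real_inner_comm, EuclideanSpace.inner_single_left]
        simp
      rw [h1, gradient, InnerProductSpace.toDual_symm_apply]
    rw [EuclideanSpace.norm_eq, Real.sq_sqrt (by positivity)]
    exact Finset.sum_congr rfl fun i _ => by rw [Real.norm_eq_abs, sq_abs, hcoord i]
  calc ∫ x, ‖gradient (fun y => ⟪kx y, θ⟫) x‖ ^ 2 ∂ρ
      = ∫ x, ∑ i : Fin d, ⟪dk i x, θ⟫ ^ 2 ∂ρ := by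
        exact integral_congr_ae (Filter.Eventually.of_forall fun x => hnorm x)
    _ = ∑ i : Fin d, ∫ x, ⟪dk i x, θ⟫ ^ 2 ∂ρ :=
        integral_finset_sum _ fun i _ => hint_sq i
    _ = ∑ i : Fin d, ⟪θ, ∫ x, ⟪dk i x, θ⟫ • dk i x ∂ρ⟫ := by
        refine Finset.sum_congr rfl fun i _ => ?_
        rw [← integral_inner (hint_v i) θ]
        refine integral_congr_ae (Filter.Eventually.of_forall fun x => ?_)
        simp only [real_inner_smul_right]
        rw [real_inner_comm θ (dk i x)]
        ring
    _ = ⟪θ, ∑ i : Fin d, ∫ x, ⟪dk i x, θ⟫ • dk i x ∂ρ⟫ := (inner_sum _ _ _).symm
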